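/- Let q_1,...,q_n be feasible for the improved linear program. Then the positive reals p_k = k^{3/2}·e^{q_k}, k = 1,...,n, are feasible for the improved optimization problem. -/

import Mathlib

open BigOperators

/-- Positive reals `p 1, ..., p n` are feasible for the improved optimization
problem (Program 3.5): Wilkinson's constraints
`∏_{i=1}^k p_i ≤ k^{k/2} p_k^k` for `k = 1, ..., n`, together with
`∏_{i=1}^k p_i ≤ k^k p_{k+ℓ}^{k-ℓ} (p_k + p_{k+ℓ})^ℓ / ((k-ℓ)^{(k-ℓ)/2} ℓ^{ℓ/2})`
for `k = 2, ..., n-1` and `ℓ = 1, ..., min (k-1) (n-k)`. -/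
def ImpOptFeasible (n : ℕ) (p : ℕ → ℝ) : Prop :=
  (∀ k : ℕ, 1 ≤ k → k ≤ n → 0 < p k) ∧
  (∀ k : ℕ, 1 ≤ k → k ≤ n →
    ∏ i ∈ Finset.Icc 1 k, p i ≤ (k : ℝ) ^ ((k : ℝ) / 2) * p k ^ k) ∧
  (∀ k ℓ : ℕ, 2 ≤ k → k + 1 ≤ n → 1 ≤ ℓ → ℓ + 1 ≤ k → k + ℓ ≤ n →
    ∏ i ∈ Finset.Icc 1 k, p i ≤
      (k : ℝ) ^ (k : ℝ) * p (k + ℓ) ^ (k - ℓ) * (p k + p (k + ℓ)) ^ ℓ /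
        (((k : ℝ) - (ℓ : ℝ)) ^ (((k : ℝ) - (ℓ : ℝ)) / 2) * (ℓ : ℝ) ^ ((ℓ : ℝ) / 2)))

/-- Reals `q 1, ..., q n` are feasible for the improved linear program
(Program 3.8): `∑_{i=1}^k q_i ≤ (k/2) ln k + k q_k` for `k = 1, ..., n`, and
`∑_{i=1}^k q_i ≤ (k/2) ln (11k/4) + (k-ℓ) q_{k+ℓ} + ℓ q_k`
for `k = 2, ..., n-1` and `ℓ = 1, ..., min (k-1) (n-k)`. -/
def ImpLPFeasible (n : ℕ) (q : ℕ → ℝ) : Prop :=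
  (∀ k : ℕ, 1 ≤ k → k ≤ n →
    ∑ i ∈ Finset.Icc 1 k, q i ≤ ((k : ℝ) / 2) * Real.log k + (k : ℝ) * q k) ∧
  (∀ k ℓ : ℕ, 2 ≤ k → k + 1 ≤ n → 1 ≤ ℓ → ℓ + 1 ≤ k → k + ℓ ≤ n →
    ∑ i ∈ Finset.Icc 1 k, q i ≤
      ((k : ℝ) / 2) * Real.log (11 * (k : ℝ) / 4) +
        ((k : ℝ) - (ℓ : ℝ)) * q (k + ℓ) + (ℓ : ℝ) * q k)

section Aux
open Real

private lemma myLogFactorialLe (n : ℕ) (hn : 1 ≤ n) :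
    Real.log (Nat.factorial n) ≤ ((n:ℝ) + 1/2) * Real.log n + 1 - n := by
  have h := Stirling.log_stirlingSeq'_antitone (Nat.zero_le (n - 1))
  simp only [Function.comp] at h
  rw [Nat.succ_eq_add_one, Nat.sub_add_cancel hn] at h
  rw [Stirling.log_stirlingSeq_formula, Stirling.stirlingSeq_one] at h
  have hn0 : (0:ℝ) < n := by exact_mod_cast hn
  have h1 : Real.log ((n:ℝ) / Real.exp 1) = Real.log n - 1 := by
    rw [Real.log_div (ne_of_gt hn0) (Real.exp_ne_zero 1), Real.log_exp]
  have h2 : Real.log (2 * (n:ℝ)) = Real.log 2 + Real.log n := by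
    rw [Real.log_mul (by norm_num) (ne_of_gt hn0)]
  have h3 : Real.log (Real.exp 1 / Real.sqrt 2) = 1 - Real.log 2 / 2 := by
    rw [Real.log_div (Real.exp_ne_zero 1) (by positivity), Real.log_exp,
      Real.log_sqrt (by norm_num)]
  rw [h1, h2, h3] at h
  nlinarith [h]

private lemma myLogLeDiv {x : ℝ} (hx : 0 < x) : Real.log x ≤ x / (271/100) := by
  have h := Real.log_le_sub_one_of_pos (show 0 < x / Real.exp 1 by positivity)
  rw [Real.log_div (ne_of_gt hx) (Real.exp_ne_zero 1), Real.log_exp] at h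
  have he : ((271:ℝ)/100) ≤ Real.exp 1 := by
    have := Real.exp_one_gt_d9; linarith
  have : x / Real.exp 1 ≤ x / (271/100) :=
    div_le_div_of_nonneg_left hx.le (by norm_num) he
  linarith

private lemma myKey (k ℓ : ℕ) (hk : 2 ≤ k) (hl : 1 ≤ ℓ) (hlk : ℓ + 1 ≤ k) :
    (3/2) * Real.log (Nat.factorial k) + ((k:ℝ)/2) * Real.log (11*(k:ℝ)/4)
      + (((k:ℝ)-(ℓ:ℝ))/2) * Real.log ((k:ℝ)-(ℓ:ℝ)) + ((ℓ:ℝ)/2) * Real.log ℓ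
    ≤ ((k:ℝ) + 3*(ℓ:ℝ)/2) * Real.log k
      + (3*((k:ℝ)-(ℓ:ℝ))/2) * Real.log ((k:ℝ)+(ℓ:ℝ)) := by
  have hK0 : (2:ℝ) ≤ (k:ℝ) := by exact_mod_cast hk
  have hL1 : (1:ℝ) ≤ (ℓ:ℝ) := by exact_mod_cast hl
  have hLK : (ℓ:ℝ) + 1 ≤ (k:ℝ) := by exact_mod_cast hlk
  have hsplit : Real.log (11*(k:ℝ)/4) = Real.log (11/4) + Real.log k := by
    rw [show 11*(k:ℝ)/4 = (11/4) * k by ring,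
      Real.log_mul (by norm_num) (by positivity)]
  rw [hsplit]
  rcases eq_or_lt_of_le hk with h2 | h3
  · have hk2 : k = 2 := h2.symm
    have hl1 : ℓ = 1 := by omega
    subst hk2 hl1
    norm_num
    have h11 : Real.log (11/4 : ℝ) = Real.log 11 - 2 * Real.log 2 := by
      rw [Real.log_div (by norm_num) (by norm_num),
        show (4:ℝ) = 2^2 by norm_num, Real.log_pow]
      push_cast; ring
    have hbig : Real.log ((11:ℝ)^2) ≤ Real.log ((2:ℝ)^6 * 3^3) :=
      Real.log_le_log (by norm_num) (by norm_num)
    rw [Real.log_mul (by norm_num) (by norm_num), Real.log_pow, Real.log_pow,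
      Real.log_pow] at hbig
    push_cast at hbig ⊢
    nlinarith [hbig, h11]
  · have hK3 : (3:ℝ) ≤ (k:ℝ) := by exact_mod_cast h3
    have hF := myLogFactorialLe k (by omega)
    have hA0 : 0 ≤ Real.log (k:ℝ) := Real.log_nonneg (by linarith)
    have hBA : Real.log (ℓ:ℝ) ≤ Real.log (k:ℝ) :=
      Real.log_le_log (by linarith) (by linarith)
    have hCA : Real.log ((k:ℝ) - (ℓ:ℝ)) ≤ Real.log (k:ℝ) :=
      Real.log_le_log (by linarith) (by linarith)
    have hAD : Real.log (k:ℝ) ≤ Real.log ((k:ℝ) + (ℓ:ℝ)) :=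
      Real.log_le_log (by linarith) (by linarith)
    have hG : Real.log (11/4 : ℝ) ≤ (203/200) := by
      have := myLogLeDiv (show (0:ℝ) < 11/4 by norm_num); linarith
    have hAe : Real.log (k:ℝ) ≤ (k:ℝ) / (271/100) := myLogLeDiv (by linarith)
    have e1 : (((k:ℝ)-(ℓ:ℝ))/2) * Real.log ((k:ℝ)-(ℓ:ℝ))
        ≤ (((k:ℝ)-(ℓ:ℝ))/2) * Real.log (k:ℝ) :=
      mul_le_mul_of_nonneg_left hCA (by linarith)
    have e2 : ((ℓ:ℝ)/2) * Real.log (ℓ:ℝ) ≤ ((ℓ:ℝ)/2) * Real.log (k:ℝ) :=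
      mul_le_mul_of_nonneg_left hBA (by linarith)
    have e3 : (3*((k:ℝ)-(ℓ:ℝ))/2) * Real.log (k:ℝ)
        ≤ (3*((k:ℝ)-(ℓ:ℝ))/2) * Real.log ((k:ℝ)+(ℓ:ℝ)) :=
      mul_le_mul_of_nonneg_left hAD (by linarith)
    have e4 : ((k:ℝ)/2) * Real.log (11/4 : ℝ) ≤ ((k:ℝ)/2) * (203/200) :=
      mul_le_mul_of_nonneg_left hG (by linarith)
    have e5 : (3/4 : ℝ) * Real.log (k:ℝ) ≤ (3/4) * ((k:ℝ) / (271/100)) := by linarith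
    linarith [e1, e2, e3, e4, e5, hF]

private lemma myProdIccCast (k : ℕ) :
    ∏ i ∈ Finset.Icc 1 k, (i:ℝ) = (Nat.factorial k : ℝ) := by
  rw [← Nat.cast_prod]
  congr 1
  rw [← Finset.Ico_add_one_right_eq_Icc]
  exact Finset.prod_Ico_id_eq_factorial k

private lemma myProdP (q : ℕ → ℝ) (k : ℕ) :
    ∏ i ∈ Finset.Icc 1 k, ((i:ℝ) ^ ((3:ℝ)/2) * Real.exp (q i))
      = ((Nat.factorial k : ℝ)) ^ ((3:ℝ)/2)
        * Real.exp (∑ i ∈ Finset.Icc 1 k, q i) := by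
  rw [Finset.prod_mul_distrib, ← Real.exp_sum]
  congr 1
  rw [Real.finset_prod_rpow _ _ (fun i _ => by positivity), myProdIccCast]

end Aux

/-- Proposition 3.9 (feasibility direction): if `q` is feasible for the
improved linear program, then `p_k = k^{3/2} e^{q_k}` is feasible for the
improved optimization problem. -/


theorem impLP_to_impOpt (n : ℕ) (q : ℕ → ℝ) (hq : ImpLPFeasible n q) :
    ImpOptFeasible n (fun k => (k : ℝ) ^ ((3 : ℝ) / 2) * Real.exp (q k)) := by
  obtain ⟨lp1, lp2⟩ := hq
  refine ⟨?_, ?_, ?_⟩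
  · intro k hk1 _
    have hk0 : (0:ℝ) < k := by exact_mod_cast hk1
    positivity
  · intro k hk1 hkn
    simp only
    rw [myProdP q k]
    have hk0 : (0:ℝ) < k := by exact_mod_cast hk1
    have hf0 : (0:ℝ) < (Nat.factorial k : ℝ) := by
      exact_mod_cast Nat.factorial_pos k
    have hS := lp1 k hk1 hkn
    have hlogf : Real.log (Nat.factorial k : ℝ) ≤ (k:ℝ) * Real.log k := by
      have h1 : Real.log (Nat.factorial k : ℝ) ≤ Real.log ((k:ℝ)^k) :=
        Real.log_le_log hf0 (by exact_mod_cast Nat.factorial_le_pow k)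
      rwa [Real.log_pow] at h1
    have hA0 : 0 ≤ Real.log (k:ℝ) := Real.log_nonneg (by exact_mod_cast hk1)
    rw [Real.rpow_def_of_pos hf0, Real.rpow_def_of_pos hk0,
      mul_pow, Real.rpow_def_of_pos hk0, ← Real.exp_nat_mul, ← Real.exp_nat_mul,
      ← Real.exp_add, ← Real.exp_add, ← Real.exp_add]
    apply Real.exp_le_exp.mpr
    nlinarith [hS, hlogf, hA0]
  · intro k ℓ hk2 hkn hl1 hlk hkln
    simp only
    have hlek : ℓ ≤ k := by omega
    have hK2 : (2:ℝ) ≤ (k:ℝ) := by exact_mod_cast hk2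
    have hL1 : (1:ℝ) ≤ (ℓ:ℝ) := by exact_mod_cast hl1
    have hLK : (ℓ:ℝ) + 1 ≤ (k:ℝ) := by exact_mod_cast hlk
    have hKL0 : (0:ℝ) < (k:ℝ) - (ℓ:ℝ) := by linarith
    have hcast : ((k - ℓ : ℕ) : ℝ) = (k:ℝ) - (ℓ:ℝ) := by
      push_cast [Nat.cast_sub hlek]; ring
    have hcast2 : ((k + ℓ : ℕ) : ℝ) = (k:ℝ) + (ℓ:ℝ) := by push_cast; ring
    have hM : (0:ℝ) < ((k : ℝ) - (ℓ : ℝ)) ^ (((k : ℝ) - (ℓ : ℝ)) / 2)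
        * (ℓ : ℝ) ^ ((ℓ : ℝ) / 2) := by
      exact mul_pos (Real.rpow_pos_of_pos hKL0 _)
        (Real.rpow_pos_of_pos (by linarith) _)
    set pk : ℝ := (k:ℝ) ^ ((3:ℝ)/2) * Real.exp (q k) with hpk
    set pm : ℝ := ((k + ℓ : ℕ) : ℝ) ^ ((3:ℝ)/2) * Real.exp (q (k + ℓ)) with hpm
    have hpk0 : 0 ≤ pk := by positivity
    have hpm0 : 0 ≤ pm := by positivity
    have step1 : (k : ℝ) ^ (k : ℝ) * pm ^ (k - ℓ) * pk ^ ℓ /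
          (((k : ℝ) - (ℓ : ℝ)) ^ (((k : ℝ) - (ℓ : ℝ)) / 2) * (ℓ : ℝ) ^ ((ℓ : ℝ) / 2))
        ≤ (k : ℝ) ^ (k : ℝ) * pm ^ (k - ℓ) * (pk + pm) ^ ℓ /
          (((k : ℝ) - (ℓ : ℝ)) ^ (((k : ℝ) - (ℓ : ℝ)) / 2) * (ℓ : ℝ) ^ ((ℓ : ℝ) / 2)) := by
      gcongr
      all_goals first | positivity | linarith
    refine le_trans ?_ step1
    rw [le_div_iff₀ hM, myProdP q k]
    have hK0 : (0:ℝ) < (k:ℝ) := by linarith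
    have hKL0' : (0:ℝ) < ((k + ℓ : ℕ) : ℝ) := by rw [hcast2]; linarith
    have hf0 : (0:ℝ) < (Nat.factorial k : ℝ) := by exact_mod_cast Nat.factorial_pos k
    have hL0 : (0:ℝ) < (ℓ:ℝ) := by linarith
    rw [hpk, hpm]
    rw [Real.rpow_def_of_pos hf0, Real.rpow_def_of_pos hKL0, Real.rpow_def_of_pos hL0,
      Real.rpow_def_of_pos hK0 ((k:ℝ)), mul_pow, mul_pow,
      Real.rpow_def_of_pos hKL0', Real.rpow_def_of_pos hK0 ((3:ℝ)/2),
      ← Real.exp_nat_mul, ← Real.exp_nat_mul, ← Real.exp_nat_mul, ← Real.exp_nat_mul,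
      ← Real.exp_add, ← Real.exp_add, ← Real.exp_add, ← Real.exp_add, ← Real.exp_add,
      ← Real.exp_add, ← Real.exp_add]
    apply Real.exp_le_exp.mpr
    have hS := lp2 k ℓ hk2 hkn hl1 hlk hkln
    have hkey := myKey k ℓ hk2 hl1 hlk
    rw [hcast, hcast2]
    nlinarith [hS, hkey]
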